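/- Let FG_X be the free group on the set X, regarded as an X-generated group via the canonical inclusion. Then P(FG_X) is a free X-generated perfect F-inverse monoid: for every perfect F-inverse monoid T and every map f : X → T there is a unique morphism of F-inverse monoids (preserving ·, ⁻¹, m and 1) from P(FG_X) to T sending (Γ_x, x) to f(x) for every x ∈ X. -/

import Mathlib

namespace FInvPaper

universe u v w

section Generic
variable {S : Type u}

/-- The natural partial order on an inverse monoid: `a ≤ b` iff `a = b·e` for some idempotent. -/
def nle [Mul S] (a b : S) : Prop := ∃ e : S, e * e = e ∧ a = b * e

/-- The minimum group congruence σ: `a σ b` iff `a·e = b·e` for some idempotent `e`. -/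
def sigma [Mul S] (a b : S) : Prop := ∃ e : S, e * e = e ∧ a * e = b * e

/-- `m` assigns to every element the maximum element of its σ-class. -/
def IsMaxOp [Mul S] (m : S → S) : Prop :=
  ∀ a : S, sigma (m a) a ∧ ∀ b : S, sigma b a → nle b (m a)

/-- A subset of `S` which is an entire σ-class. -/
def IsSigmaClass [Mul S] (A : Set S) : Prop := ∃ a : S, A = {b : S | sigma b a}

end Generic

/-- Inverse monoids: monoids with an involution satisfying `a·a⁻¹·a = a`, `(a·b)⁻¹ = b⁻¹·a⁻¹`,
in which all idempotents commute. -/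
class InverseMonoid (S : Type u) extends Monoid S, Inv S where
  inv_inv : ∀ a : S, a⁻¹⁻¹ = a
  mul_inv_rev : ∀ a b : S, (a * b)⁻¹ = b⁻¹ * a⁻¹
  mul_inv_self_mul : ∀ a : S, a * a⁻¹ * a = a
  idem_comm : ∀ e f : S, e * e = e → f * f = f → e * f = f * e

/-- F-inverse monoids in the enriched signature `(·, ⁻¹, ᵐ, 1)`. -/
class FInverseMonoid (S : Type u) extends InverseMonoid S where
  mx : S → S
  mx_isMaxOp : IsMaxOp mx

/-- The max-operation of an F-inverse monoid. -/
def mx {S : Type u} [FInverseMonoid S] : S → S := FInverseMonoid.mx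

section InverseMonoidLemmas

variable {S : Type u} [InverseMonoid S]

lemma mul_inv_idem (a : S) : (a * a⁻¹) * (a * a⁻¹) = a * a⁻¹ := by
  conv_lhs => rw [← mul_assoc, InverseMonoid.mul_inv_self_mul]

lemma inv_mul_self_mul (a : S) : a⁻¹ * a * a⁻¹ = a⁻¹ := by
  have h := InverseMonoid.mul_inv_self_mul (a := a⁻¹)
  rwa [InverseMonoid.inv_inv] at h

lemma inv_mul_idem (a : S) : (a⁻¹ * a) * (a⁻¹ * a) = a⁻¹ * a := by
  conv_lhs => rw [← mul_assoc, inv_mul_self_mul]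

lemma idem_inv {e : S} (he : e * e = e) : e⁻¹ = e := by
  have h1 : e⁻¹ * e⁻¹ = e⁻¹ := by rw [← InverseMonoid.mul_inv_rev, he]
  have hc : e * e⁻¹ = e⁻¹ * e := InverseMonoid.idem_comm e e⁻¹ he h1
  have h2 : e = e * e⁻¹ := by
    calc e = e * e⁻¹ * e := (InverseMonoid.mul_inv_self_mul e).symm
    _ = e * (e⁻¹ * e) := mul_assoc _ _ _
    _ = e * (e * e⁻¹) := by rw [hc]
    _ = e * e * e⁻¹ := (mul_assoc _ _ _).symm
    _ = e * e⁻¹ := by rw [he]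
  have h3 : e⁻¹ = e⁻¹ * e := by
    calc e⁻¹ = e⁻¹ * e * e⁻¹ := (inv_mul_self_mul e).symm
    _ = e⁻¹ * (e * e⁻¹) := mul_assoc _ _ _
    _ = e⁻¹ * (e⁻¹ * e) := by rw [hc]
    _ = e⁻¹ * e⁻¹ * e := (mul_assoc _ _ _).symm
    _ = e⁻¹ * e := by rw [h1]
  rw [h3, ← hc, ← h2]

lemma idem_mul_idem {e f : S} (he : e * e = e) (hf : f * f = f) :
    (e * f) * (e * f) = e * f := by
  calc (e * f) * (e * f) = e * (f * (e * f)) := mul_assoc _ _ _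
  _ = e * (f * e * f) := by rw [← mul_assoc f e f]
  _ = e * (e * f * f) := by rw [← InverseMonoid.idem_comm e f he hf]
  _ = e * (e * (f * f)) := by rw [mul_assoc e f f]
  _ = e * (e * f) := by rw [hf]
  _ = e * e * f := (mul_assoc _ _ _).symm
  _ = e * f := by rw [he]

lemma sigma_refl (a : S) : sigma a a := ⟨1, one_mul 1, rfl⟩

lemma sigma_symm {a b : S} (h : sigma a b) : sigma b a := by
  obtain ⟨e, he, hab⟩ := h
  exact ⟨e, he, hab.symm⟩

lemma sigma_trans {a b c : S} (h₁ : sigma a b) (h₂ : sigma b c) : sigma a c := by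
  obtain ⟨e, he, h1⟩ := h₁
  obtain ⟨f, hf, h2⟩ := h₂
  refine ⟨e * f, idem_mul_idem he hf, ?_⟩
  calc a * (e * f) = a * e * f := (mul_assoc _ _ _).symm
  _ = b * e * f := by rw [h1]
  _ = b * (e * f) := mul_assoc _ _ _
  _ = b * (f * e) := by rw [InverseMonoid.idem_comm e f he hf]
  _ = b * f * e := (mul_assoc _ _ _).symm
  _ = c * f * e := by rw [h2]
  _ = c * (f * e) := mul_assoc _ _ _
  _ = c * (e * f) := by rw [InverseMonoid.idem_comm e f he hf]

lemma sigma_mul_left {a b : S} (c : S) (h : sigma a b) : sigma (c * a) (c * b) := by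
  obtain ⟨e, he, hab⟩ := h
  exact ⟨e, he, by rw [mul_assoc, hab, ← mul_assoc]⟩

lemma inner_lemma {e : S} (he : e * e = e) (a : S) :
    a⁻¹ * (a * e * a⁻¹) = e * a⁻¹ := by
  calc a⁻¹ * (a * e * a⁻¹) = a⁻¹ * (a * e) * a⁻¹ := by rw [← mul_assoc a⁻¹ (a * e) a⁻¹]
  _ = a⁻¹ * a * e * a⁻¹ := by rw [← mul_assoc a⁻¹ a e]
  _ = e * (a⁻¹ * a) * a⁻¹ := by rw [InverseMonoid.idem_comm (a⁻¹ * a) e (inv_mul_idem a) he]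
  _ = e * (a⁻¹ * a * a⁻¹) := by rw [mul_assoc e (a⁻¹ * a) a⁻¹]
  _ = e * a⁻¹ := by rw [inv_mul_self_mul]

lemma sigma_inv {a b : S} (h : sigma a b) : sigma a⁻¹ b⁻¹ := by
  obtain ⟨e, he, hab⟩ := h
  have key5 : e * a⁻¹ = e * b⁻¹ := by
    have h' : (a * e)⁻¹ = (b * e)⁻¹ := by rw [hab]
    rwa [InverseMonoid.mul_inv_rev, InverseMonoid.mul_inv_rev, idem_inv he] at h'
  have key1 : (a * e * a⁻¹) * (a * e * a⁻¹) = a * e * a⁻¹ := by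
    calc (a * e * a⁻¹) * (a * e * a⁻¹) = a * e * (a⁻¹ * (a * e * a⁻¹)) := mul_assoc _ _ _
    _ = a * e * (e * a⁻¹) := by rw [inner_lemma he a]
    _ = a * e * e * a⁻¹ := (mul_assoc _ _ _).symm
    _ = a * (e * e) * a⁻¹ := by rw [mul_assoc a e e]
    _ = a * e * a⁻¹ := by rw [he]
  have key3 : a * e * a⁻¹ = b * e * b⁻¹ := by
    calc a * e * a⁻¹ = a * (e * e) * a⁻¹ := by rw [he]
    _ = a * e * e * a⁻¹ := by rw [← mul_assoc a e e]
    _ = a * e * (e * a⁻¹) := mul_assoc _ _ _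
    _ = a * e * (e * b⁻¹) := by rw [key5]
    _ = b * e * (e * b⁻¹) := by rw [hab]
    _ = b * e * e * b⁻¹ := (mul_assoc _ _ _).symm
    _ = b * (e * e) * b⁻¹ := by rw [mul_assoc b e e]
    _ = b * e * b⁻¹ := by rw [he]
  refine ⟨a * e * a⁻¹, key1, ?_⟩
  rw [inner_lemma he a, key5, key3, inner_lemma he b]

lemma sigma_mul_right {a b : S} (c : S) (h : sigma a b) : sigma (a * c) (b * c) := by
  have h1 := sigma_mul_left c⁻¹ (sigma_inv h)
  have h2 := sigma_inv h1
  rwa [InverseMonoid.mul_inv_rev c⁻¹ a⁻¹, InverseMonoid.mul_inv_rev c⁻¹ b⁻¹,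
    InverseMonoid.inv_inv, InverseMonoid.inv_inv, InverseMonoid.inv_inv] at h2

instance sigmaSetoid (S : Type u) [InverseMonoid S] : Setoid S where
  r := sigma
  iseqv := ⟨sigma_refl, sigma_symm, sigma_trans⟩

/-- The maximum group quotient `S/σ`. -/
def GQuot (S : Type u) [InverseMonoid S] : Type u := Quotient (sigmaSetoid S)

/-- The σ-class of an element, as an element of the maximum group quotient. -/
def σclass {S : Type u} [InverseMonoid S] (a : S) : GQuot S := Quotient.mk (sigmaSetoid S) a

instance (S : Type u) [InverseMonoid S] : Group (GQuot S) where
  mul := Quotient.map₂ (· * ·) (fun _ _ h₁ _ _ h₂ =>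
    sigma_trans (sigma_mul_right _ h₁) (sigma_mul_left _ h₂))
  one := σclass 1
  inv := Quotient.map (·⁻¹) (fun _ _ h => sigma_inv h)
  mul_assoc := by
    intro a b c
    induction a using Quotient.ind
    induction b using Quotient.ind
    induction c using Quotient.ind
    exact congrArg (Quotient.mk _) (mul_assoc _ _ _)
  one_mul := by
    intro a
    induction a using Quotient.ind
    exact congrArg (Quotient.mk _) (one_mul _)
  mul_one := by
    intro a
    induction a using Quotient.ind
    exact congrArg (Quotient.mk _) (mul_one _)
  inv_mul_cancel := by
    intro a
    induction a using Quotient.ind with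
    | _ a =>
      refine Quotient.sound ⟨a⁻¹ * a, inv_mul_idem a, ?_⟩
      rw [one_mul]
      exact inv_mul_idem a

end InverseMonoidLemmas


section Graphs

variable {G : Type u} [Group G] {X : Type v}

/-- A subgraph of the Cayley graph `Cay(G)` of the `X`-generated group `G` (with assignment
mapping `φ : X → G`), represented by its set of vertices and its set of positive edges:
the positive edge `(g, x)` goes from `g` to `g * φ x` and carries the label `x`; every
subgraph closed under edge inversion is uniquely determined by this data. -/
structure Subgraph (φ : X → G) : Type (max u v) where
  verts : Set G
  edges : Set (G × X)
  src_mem : ∀ e ∈ edges, Prod.fst e ∈ verts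
  tgt_mem : ∀ e ∈ edges, e.1 * φ e.2 ∈ verts

namespace Subgraph

variable {φ : X → G}

lemma ext' {Γ Δ : Subgraph φ} (hv : Γ.verts = Δ.verts) (he : Γ.edges = Δ.edges) : Γ = Δ := by
  cases Γ; cases Δ; cases hv; cases he; rfl

/-- Union of subgraphs. -/
def union (Γ Δ : Subgraph φ) : Subgraph φ where
  verts := Γ.verts ∪ Δ.verts
  edges := Γ.edges ∪ Δ.edges
  src_mem := by
    intro e he
    rcases he with h | h
    · exact Set.mem_union_left _ (Γ.src_mem e h)
    · exact Set.mem_union_right _ (Δ.src_mem e h)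
  tgt_mem := by
    intro e he
    rcases he with h | h
    · exact Set.mem_union_left _ (Γ.tgt_mem e h)
    · exact Set.mem_union_right _ (Δ.tgt_mem e h)

instance : Union (Subgraph φ) := ⟨union⟩

@[simp] lemma union_verts (Γ Δ : Subgraph φ) : (Γ ∪ Δ).verts = Γ.verts ∪ Δ.verts := rfl
@[simp] lemma union_edges (Γ Δ : Subgraph φ) : (Γ ∪ Δ).edges = Γ.edges ∪ Δ.edges := rfl

/-- Left translation of a subgraph by a group element. -/
def smul (g : G) (Γ : Subgraph φ) : Subgraph φ where
  verts := (g * ·) '' Γ.verts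
  edges := (fun e => (g * e.1, e.2)) '' Γ.edges
  src_mem := by
    rintro e ⟨e', he', rfl⟩
    exact ⟨e'.1, Γ.src_mem e' he', rfl⟩
  tgt_mem := by
    rintro e ⟨e', he', rfl⟩
    exact ⟨e'.1 * φ e'.2, Γ.tgt_mem e' he', (mul_assoc g e'.1 (φ e'.2)).symm⟩

instance : SMul G (Subgraph φ) := ⟨smul⟩

@[simp] lemma smul_verts (g : G) (Γ : Subgraph φ) : (g • Γ).verts = (g * ·) '' Γ.verts := rfl
@[simp] lemma smul_edges (g : G) (Γ : Subgraph φ) :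
    (g • Γ).edges = (fun e : G × X => (g * e.1, e.2)) '' Γ.edges := rfl

/-- The subgraph relation. -/
instance : HasSubset (Subgraph φ) := ⟨fun Γ Δ => Γ.verts ⊆ Δ.verts ∧ Γ.edges ⊆ Δ.edges⟩

lemma subset_iff (Γ Δ : Subgraph φ) : Γ ⊆ Δ ↔ Γ.verts ⊆ Δ.verts ∧ Γ.edges ⊆ Δ.edges := Iff.rfl

/-- Finiteness of a subgraph. -/
def IsFinite (Γ : Subgraph φ) : Prop := Γ.verts.Finite ∧ Γ.edges.Finite

/-- A subgraph has no isolated vertices if each of its vertices is an endpoint of one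
of its edges. -/
def NoIsolated (Γ : Subgraph φ) : Prop :=
  ∀ v ∈ Γ.verts, ∃ e ∈ Γ.edges, v = e.1 ∨ v = e.1 * φ e.2

/-- `Ed(Γ)`: the subgraph spanned by the edges of `Γ`, i.e. `Γ` with all isolated vertices
removed. -/
def ed (Γ : Subgraph φ) : Subgraph φ where
  verts := {v | ∃ e ∈ Γ.edges, v = e.1 ∨ v = e.1 * φ e.2}
  edges := Γ.edges
  src_mem := fun e he => ⟨e, he, Or.inl rfl⟩
  tgt_mem := fun e he => ⟨e, he, Or.inr rfl⟩

lemma ed_finite {Γ : Subgraph φ} (h : Γ.IsFinite) : Γ.ed.IsFinite := by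
  constructor
  · have hsub : Γ.ed.verts ⊆
        (fun e : G × X => e.1) '' Γ.edges ∪ (fun e : G × X => e.1 * φ e.2) '' Γ.edges := by
      rintro v ⟨e, he, rfl | rfl⟩
      · exact Set.mem_union_left _ ⟨e, he, rfl⟩
      · exact Set.mem_union_right _ ⟨e, he, rfl⟩
    exact ((h.2.image _).union (h.2.image _)).subset hsub
  · exact h.2

lemma ed_noIsolated (Γ : Subgraph φ) : Γ.ed.NoIsolated := fun _ hv => hv

end Subgraph

open Subgraph

variable {φ : X → G}

/-- The subgraph with the single vertex `g` and no edges. -/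
def vertexG (φ : X → G) (g : G) : Subgraph φ :=
  ⟨{g}, ∅, by simp, by simp⟩

/-- `Δ_g`: the edgeless subgraph with vertices `1` and `g`. -/
def deltaG (φ : X → G) (g : G) : Subgraph φ :=
  ⟨{1, g}, ∅, by simp, by simp⟩

/-- The subgraph spanned by a single (positive) edge. -/
def edgeG (φ : X → G) (e : G × X) : Subgraph φ where
  verts := {e.1, e.1 * φ e.2}
  edges := {e}
  src_mem := by
    intro e' he'
    rw [Set.mem_singleton_iff] at he'
    subst he'
    exact Set.mem_insert _ _
  tgt_mem := by
    intro e' he'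
    rw [Set.mem_singleton_iff] at he'
    subst he'
    exact Set.mem_insert_of_mem _ rfl

/-- The empty subgraph. -/
def emptyG (φ : X → G) : Subgraph φ := ⟨∅, ∅, by simp, by simp⟩

lemma edgeG_noIsolated (φ : X → G) (e : G × X) : (edgeG φ e).NoIsolated := by
  intro v hv
  refine ⟨e, Set.mem_singleton e, ?_⟩
  simpa [edgeG] using hv

/-- Two vertices are adjacent in `Γ` if they are connected by an edge of `Γ`. -/
def adj (Γ : Subgraph φ) (u v : G) : Prop :=
  ∃ e ∈ Γ.edges, (u = e.1 ∧ v = e.1 * φ e.2) ∨ (v = e.1 ∧ u = e.1 * φ e.2)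

/-- A subgraph is connected if any two of its vertices are joined by a path running in it. -/
def Connected (Γ : Subgraph φ) : Prop :=
  ∀ u ∈ Γ.verts, ∀ v ∈ Γ.verts, Relation.ReflTransGen (adj Γ) u v

lemma adj_mono {Γ Δ : Subgraph φ} (h : Γ.edges ⊆ Δ.edges) {u v : G} (ha : adj Γ u v) :
    adj Δ u v := by
  obtain ⟨e, he, hc⟩ := ha
  exact ⟨e, h he, hc⟩

lemma Connected.union {Γ Δ : Subgraph φ} (hΓ : Connected Γ) (hΔ : Connected Δ) (w : G)
    (hw₁ : w ∈ Γ.verts) (hw₂ : w ∈ Δ.verts) : Connected (Γ ∪ Δ) := by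
  have hsΓ : Γ.edges ⊆ (Γ ∪ Δ).edges := by
    rw [union_edges]; exact Set.subset_union_left
  have hsΔ : Δ.edges ⊆ (Γ ∪ Δ).edges := by
    rw [union_edges]; exact Set.subset_union_right
  have mΓ : ∀ {p q : G}, Relation.ReflTransGen (adj Γ) p q →
      Relation.ReflTransGen (adj (Γ ∪ Δ)) p q :=
    fun h => Relation.ReflTransGen.mono (fun _ _ h' => adj_mono hsΓ h') _ _ h
  have mΔ : ∀ {p q : G}, Relation.ReflTransGen (adj Δ) p q →
      Relation.ReflTransGen (adj (Γ ∪ Δ)) p q :=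
    fun h => Relation.ReflTransGen.mono (fun _ _ h' => adj_mono hsΔ h') _ _ h
  intro u hu v hv
  rw [union_verts] at hu hv
  rcases hu with hu | hu <;> rcases hv with hv | hv
  · exact mΓ (hΓ u hu v hv)
  · exact (mΓ (hΓ u hu w hw₁)).trans (mΔ (hΔ w hw₂ v hv))
  · exact (mΔ (hΔ u hu w hw₂)).trans (mΓ (hΓ w hw₁ v hv))
  · exact mΔ (hΔ u hu v hv)

lemma Connected.smul {Γ : Subgraph φ} (g : G) (h : Connected Γ) : Connected (g • Γ) := by
  intro u hu v hv
  rw [smul_verts] at hu hv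
  obtain ⟨u', hu', rfl⟩ := hu
  obtain ⟨v', hv', rfl⟩ := hv
  refine Relation.ReflTransGen.lift (fun z => g * z) ?_ _ _ (h u' hu' v' hv')
  rintro p q ⟨e, he, hc⟩
  refine ⟨(g * e.1, e.2), ?_, ?_⟩
  · rw [smul_edges]; exact ⟨e, he, rfl⟩
  · rcases hc with ⟨rfl, rfl⟩ | ⟨rfl, rfl⟩
    · exact Or.inl ⟨rfl, (mul_assoc _ _ _).symm⟩
    · exact Or.inr ⟨rfl, (mul_assoc _ _ _).symm⟩

lemma Subgraph.NoIsolated.union {Γ Δ : Subgraph φ} (hΓ : Γ.NoIsolated) (hΔ : Δ.NoIsolated) :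
    (Γ ∪ Δ).NoIsolated := by
  intro v hv
  rw [union_verts] at hv
  rcases hv with hv | hv
  · obtain ⟨e, he, hor⟩ := hΓ v hv
    exact ⟨e, by rw [union_edges]; exact Set.mem_union_left _ he, hor⟩
  · obtain ⟨e, he, hor⟩ := hΔ v hv
    exact ⟨e, by rw [union_edges]; exact Set.mem_union_right _ he, hor⟩

lemma Subgraph.NoIsolated.smul {Γ : Subgraph φ} (g : G) (h : Γ.NoIsolated) :
    (g • Γ).NoIsolated := by
  intro v hv
  rw [smul_verts] at hv
  obtain ⟨u, hu, rfl⟩ := hv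
  obtain ⟨e, he, hor⟩ := h u hu
  refine ⟨(g * e.1, e.2), by rw [smul_edges]; exact ⟨e, he, rfl⟩, ?_⟩
  rcases hor with rfl | rfl
  · exact Or.inl rfl
  · exact Or.inr (mul_assoc _ _ _).symm

end Graphs


section Expansions

variable {G : Type u} [Group G] {X : Type v} {φ : X → G}

open Subgraph

/-- `F(G)`: pairs `(Γ, g)` where `Γ` is a finite subgraph of `Cay(G)` having `1` and `g`
among its vertices. -/
structure FExp (φ : X → G) : Type (max u v) where
  graph : Subgraph φ
  elt : G
  finite : graph.IsFinite
  one_mem : (1 : G) ∈ graph.verts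
  elt_mem : elt ∈ graph.verts

namespace FExp

lemma ext' {a b : FExp φ} (hg : a.graph = b.graph) (he : a.elt = b.elt) : a = b := by
  cases a; cases b; cases hg; cases he; rfl

instance : Mul (FExp φ) :=
  ⟨fun a b =>
    { graph := a.graph ∪ a.elt • b.graph
      elt := a.elt * b.elt
      finite := ⟨by
          rw [union_verts, smul_verts]
          exact a.finite.1.union (b.finite.1.image _),
        by
          rw [union_edges, smul_edges]
          exact a.finite.2.union (b.finite.2.image _)⟩
      one_mem := by
        rw [union_verts]
        exact Set.mem_union_left _ a.one_mem
      elt_mem := by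
        rw [union_verts]
        refine Set.mem_union_right _ ?_
        rw [smul_verts]
        exact ⟨b.elt, b.elt_mem, rfl⟩ }⟩

@[simp] lemma mul_graph (a b : FExp φ) : (a * b).graph = a.graph ∪ a.elt • b.graph := rfl
@[simp] lemma mul_elt (a b : FExp φ) : (a * b).elt = a.elt * b.elt := rfl

instance : One (FExp φ) :=
  ⟨{ graph := deltaG φ 1
     elt := 1
     finite := ⟨(Set.finite_singleton (1 : G)).insert 1, Set.finite_empty⟩
     one_mem := Set.mem_insert 1 _
     elt_mem := Set.mem_insert 1 _ }⟩

@[simp] lemma one_graph : (1 : FExp φ).graph = deltaG φ 1 := rfl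
@[simp] lemma one_elt : (1 : FExp φ).elt = 1 := rfl

instance : Inv (FExp φ) :=
  ⟨fun a =>
    { graph := a.elt⁻¹ • a.graph
      elt := a.elt⁻¹
      finite := ⟨by rw [smul_verts]; exact a.finite.1.image _,
        by rw [smul_edges]; exact a.finite.2.image _⟩
      one_mem := by
        rw [smul_verts]
        exact ⟨a.elt, a.elt_mem, inv_mul_cancel a.elt⟩
      elt_mem := by
        rw [smul_verts]
        exact ⟨1, a.one_mem, mul_one _⟩ }⟩

@[simp] lemma inv_graph (a : FExp φ) : (a⁻¹).graph = a.elt⁻¹ • a.graph := rfl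
@[simp] lemma inv_elt (a : FExp φ) : (a⁻¹).elt = a.elt⁻¹ := rfl

end FExp

/-- The element `(Δ_g, g)` of `F(G)`. -/
def maxElt (φ : X → G) (g : G) : FExp φ where
  graph := deltaG φ g
  elt := g
  finite := ⟨(Set.finite_singleton g).insert 1, Set.finite_empty⟩
  one_mem := Set.mem_insert 1 _
  elt_mem := Set.mem_insert_of_mem _ rfl

/-- The max-operation `(Γ, g) ↦ (Δ_g, g)` on `F(G)`. -/
def mxOp (a : FExp φ) : FExp φ := maxElt φ a.elt

/-- The generator `(Γ_x, x_G)` of `F(G)`. -/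
def genElt (φ : X → G) (x : X) : FExp φ where
  graph := edgeG φ (1, x)
  elt := φ x
  finite := ⟨(Set.finite_singleton _).insert _, Set.finite_singleton _⟩
  one_mem := Set.mem_insert 1 _
  elt_mem := by simp [edgeG]

/-- `M(G)`: the Margolis–Meakin expansion; pairs `(Γ, g)` where `Γ` is a finite *connected*
subgraph of `Cay(G)` having `1` and `g` among its vertices. -/
structure MExp (φ : X → G) : Type (max u v) where
  graph : Subgraph φ
  elt : G
  finite : graph.IsFinite
  connected : Connected graph
  one_mem : (1 : G) ∈ graph.verts
  elt_mem : elt ∈ graph.verts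

namespace MExp

instance : Mul (MExp φ) :=
  ⟨fun a b =>
    { graph := a.graph ∪ a.elt • b.graph
      elt := a.elt * b.elt
      finite := ⟨by
          rw [union_verts, smul_verts]
          exact a.finite.1.union (b.finite.1.image _),
        by
          rw [union_edges, smul_edges]
          exact a.finite.2.union (b.finite.2.image _)⟩
      connected := by
        refine Connected.union a.connected (Connected.smul a.elt b.connected) a.elt a.elt_mem ?_
        rw [smul_verts]
        exact ⟨1, b.one_mem, mul_one _⟩
      one_mem := by
        rw [union_verts]
        exact Set.mem_union_left _ a.one_mem
      elt_mem := by
        rw [union_verts]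
        refine Set.mem_union_right _ ?_
        rw [smul_verts]
        exact ⟨b.elt, b.elt_mem, rfl⟩ }⟩

end MExp

/-- `P(G)`: pairs `(Γ, g)` where `Γ` is a finite subgraph of `Cay(G)` without isolated
vertices and `g ∈ G` (a model of the semidirect product of the semilattice of such
subgraphs by `G`). -/
structure PExp (φ : X → G) : Type (max u v) where
  graph : Subgraph φ
  elt : G
  finite : graph.IsFinite
  noIsolated : graph.NoIsolated

namespace PExp

lemma ext' {a b : PExp φ} (hg : a.graph = b.graph) (he : a.elt = b.elt) : a = b := by
  cases a; cases b; cases hg; cases he; rfl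

instance : Mul (PExp φ) :=
  ⟨fun a b =>
    { graph := a.graph ∪ a.elt • b.graph
      elt := a.elt * b.elt
      finite := ⟨by
          rw [union_verts, smul_verts]
          exact a.finite.1.union (b.finite.1.image _),
        by
          rw [union_edges, smul_edges]
          exact a.finite.2.union (b.finite.2.image _)⟩
      noIsolated := a.noIsolated.union (b.noIsolated.smul a.elt) }⟩

@[simp] lemma mul_graph (a b : PExp φ) : (a * b).graph = a.graph ∪ a.elt • b.graph := rfl
@[simp] lemma mul_elt (a b : PExp φ) : (a * b).elt = a.elt * b.elt := rfl

instance : One (PExp φ) :=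
  ⟨{ graph := emptyG φ
     elt := 1
     finite := ⟨Set.finite_empty, Set.finite_empty⟩
     noIsolated := by intro v hv; simp [emptyG] at hv }⟩

@[simp] lemma one_graph : (1 : PExp φ).graph = emptyG φ := rfl
@[simp] lemma one_elt : (1 : PExp φ).elt = 1 := rfl

instance : Inv (PExp φ) :=
  ⟨fun a =>
    { graph := a.elt⁻¹ • a.graph
      elt := a.elt⁻¹
      finite := ⟨by rw [smul_verts]; exact a.finite.1.image _,
        by rw [smul_edges]; exact a.finite.2.image _⟩
      noIsolated := a.noIsolated.smul _ }⟩

@[simp] lemma inv_graph (a : PExp φ) : (a⁻¹).graph = a.elt⁻¹ • a.graph := rfl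
@[simp] lemma inv_elt (a : PExp φ) : (a⁻¹).elt = a.elt⁻¹ := rfl

end PExp

/-- The max-operation `(Γ, g) ↦ (∅, g)` on `P(G)`. -/
def pMax (a : PExp φ) : PExp φ where
  graph := emptyG φ
  elt := a.elt
  finite := ⟨Set.finite_empty, Set.finite_empty⟩
  noIsolated := by intro v hv; simp [emptyG] at hv

/-- The generator `(Γ_x, x_G)` of `P(G)`. -/
def genEltP (φ : X → G) (x : X) : PExp φ where
  graph := edgeG φ (1, x)
  elt := φ x
  finite := ⟨(Set.finite_singleton _).insert _, Set.finite_singleton _⟩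
  noIsolated := edgeG_noIsolated φ (1, x)

/-- The canonical map `F(G) → P(G)`, `(Γ, g) ↦ (Ed(Γ), g)`. -/
def edMap (a : FExp φ) : PExp φ where
  graph := a.graph.ed
  elt := a.elt
  finite := ed_finite a.finite
  noIsolated := a.graph.ed_noIsolated

/-- The relation `θ` on `F(G)`: `(Γ,g) θ (Ξ,h)` iff `g = h` and `Ed(Γ) = Ed(Ξ)`. -/
def thetaRel (φ : X → G) (a b : FExp φ) : Prop := a.elt = b.elt ∧ a.graph.ed = b.graph.ed

end Expansions

section Terms

variable {X : Type v}

/-- Terms of the term algebra `I^m_X` in their (unique) normal form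
`u₀ · m(v₁) · u₁ ⋯ u_{n-1} · m(vₙ) · uₙ` with `uᵢ, vⱼ` words in the free monoid with
involution `I_X` on `X` (represented as lists over `X ⊕ X`, where `inl x` stands for `x`
and `inr x` for `x⁻¹`): the first component is `u₀`, and the second lists the pairs
`(vᵢ, uᵢ)`. -/
abbrev MTerm (X : Type v) := List (X ⊕ X) × List (List (X ⊕ X) × List (X ⊕ X))

/-- Value of a letter of `X ⊔ X⁻¹`. -/
def letterVal {M : Type w} [Monoid M] [Inv M] (f : X → M) : X ⊕ X → M
  | Sum.inl x => f x
  | Sum.inr x => (f x)⁻¹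

/-- Value of a word of `I_X`. -/
def wordVal {M : Type w} [Monoid M] [Inv M] (f : X → M) (u : List (X ⊕ X)) : M :=
  (u.map (letterVal f)).prod

/-- Value `[t]` of a term `t ∈ I^m_X` under the assignment `f` of the generators,
where `mop` is interpreted as the operation `m`. -/
def termVal {M : Type w} [Monoid M] [Inv M] (f : X → M) (mop : M → M) (t : MTerm X) : M :=
  wordVal f t.1 * (t.2.map (fun p => mop (wordVal f p.1) * wordVal f p.2)).prod

end Terms

section Journeys

variable {G : Type u} [Group G] {X : Type v}

/-- The subgraph of `Cay(G)` spanned by the path starting at `g` with label the given word;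
for the empty word it is the single vertex `g`. -/
def pathGraph (φ : X → G) : G → List (X ⊕ X) → Subgraph φ
  | g, [] => vertexG φ g
  | g, Sum.inl x :: u => edgeG φ (g, x) ∪ pathGraph φ (g * φ x) u
  | g, Sum.inr x :: u => edgeG φ (g * (φ x)⁻¹, x) ∪ pathGraph φ (g * (φ x)⁻¹) u

/-- The subgraph of `Cay(G)` spanned by the journey `j_g(w)` induced by the term
`w = u₀ · m(v₁) · u₁ ⋯ · m(vₙ) · uₙ` starting at `g`: traverse the path labelled `u₀`
from `g`, jump to `g·[u₀v₁]`, traverse the path labelled `u₁`, and so on. -/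
def journeyGraph (φ : X → G) : G → List (X ⊕ X) → List (List (X ⊕ X) × List (X ⊕ X)) →
    Subgraph φ
  | g, u, [] => pathGraph φ g u
  | g, u, (v, u') :: rest =>
      pathGraph φ g u ∪ journeyGraph φ (g * wordVal φ u * wordVal φ v) u' rest

end Journeys


section MoreInverse
variable {T : Type w} [InverseMonoid T]

lemma one_inv' : (1 : T)⁻¹ = 1 := idem_inv (one_mul 1)

lemma nle_eq {a b : T} (h : nle a b) : b * (a⁻¹ * a) = a := by
  obtain ⟨e, he, rfl⟩ := h
  have hinv : (b * e)⁻¹ = e * b⁻¹ := by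
    rw [InverseMonoid.mul_inv_rev, idem_inv he]
  calc b * ((b * e)⁻¹ * (b * e))
      = b * (e * b⁻¹ * (b * e)) := by rw [hinv]
    _ = b * (e * (b⁻¹ * b) * e) := by rw [← mul_assoc (e * b⁻¹) b e, mul_assoc e b⁻¹ b]
    _ = b * ((b⁻¹ * b) * e * e) := by rw [InverseMonoid.idem_comm e (b⁻¹*b) he (inv_mul_idem b)]
    _ = b * ((b⁻¹ * b) * e) := by rw [mul_assoc (b⁻¹ * b) e e, he]
    _ = b * (b⁻¹ * b) * e := by rw [← mul_assoc b (b⁻¹*b) e]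
    _ = b * e := by rw [← mul_assoc b b⁻¹ b, InverseMonoid.mul_inv_self_mul]

lemma nle_antisymm {a b : T} (h1 : nle a b) (h2 : nle b a) : a = b := by
  have e1 := nle_eq h1
  have e2 := nle_eq h2
  calc a = b * (a⁻¹ * a) := e1.symm
    _ = a * (b⁻¹ * b) * (a⁻¹ * a) := by rw [e2]
    _ = a * ((b⁻¹ * b) * (a⁻¹ * a)) := mul_assoc _ _ _
    _ = a * ((a⁻¹ * a) * (b⁻¹ * b)) := by
        rw [InverseMonoid.idem_comm (b⁻¹*b) (a⁻¹*a) (inv_mul_idem b) (inv_mul_idem a)]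
    _ = a * (a⁻¹ * a) * (b⁻¹ * b) := (mul_assoc _ _ _).symm
    _ = a * a⁻¹ * a * (b⁻¹ * b) := by rw [← mul_assoc a a⁻¹ a]
    _ = a * (b⁻¹ * b) := by rw [InverseMonoid.mul_inv_self_mul]
    _ = b := e2

lemma inv_eq_of_mul_eq_one {u v : T} (h1 : u * v = 1) (h2 : v * u = 1) : v = u⁻¹ := by
  have h3 : u⁻¹ * u = 1 := by
    have : v * (u * u⁻¹ * u) = v * u := by rw [InverseMonoid.mul_inv_self_mul]
    calc u⁻¹ * u = 1 * (u⁻¹ * u) := (one_mul _).symm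
      _ = v * u * (u⁻¹ * u) := by rw [h2]
      _ = v * (u * (u⁻¹ * u)) := mul_assoc _ _ _
      _ = v * (u * u⁻¹ * u) := by rw [← mul_assoc u u⁻¹ u]
      _ = v * u := this
      _ = 1 := h2
  calc v = 1 * v := (one_mul v).symm
    _ = u⁻¹ * u * v := by rw [h3]
    _ = u⁻¹ * (u * v) := mul_assoc _ _ _
    _ = u⁻¹ := by rw [h1, mul_one]

/-- All elements of a list are idempotent. -/
def AllIdem (l : List T) : Prop := ∀ s ∈ l, s * s = s

lemma commute_of_idem {s t : T} (hs : s * s = s) (ht : t * t = t) : Commute s t :=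
  InverseMonoid.idem_comm s t hs ht

lemma commute_prod_of_idem {t : T} (ht : t * t = t) :
    ∀ l : List T, AllIdem l → t * l.prod = l.prod * t := by
  intro l
  induction l with
  | nil => intro _; rw [List.prod_nil, one_mul, mul_one]
  | cons a l ih =>
    intro h
    have ha := h a (List.mem_cons_self)
    have hl : AllIdem l := fun s hs => h s (List.mem_cons_of_mem a hs)
    rw [List.prod_cons, ← mul_assoc, commute_of_idem ht ha, mul_assoc, ih hl, ← mul_assoc]

lemma prod_idem_of_allIdem : ∀ l : List T, AllIdem l → l.prod * l.prod = l.prod := by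
  intro l
  induction l with
  | nil => intro _; rw [List.prod_nil, one_mul]
  | cons a l ih =>
    intro h
    have ha := h a (List.mem_cons_self)
    have hl : AllIdem l := fun s hs => h s (List.mem_cons_of_mem a hs)
    rw [List.prod_cons]
    calc a * l.prod * (a * l.prod) = a * (l.prod * a) * l.prod := by
          rw [mul_assoc a l.prod (a * l.prod), ← mul_assoc l.prod a l.prod,
            ← mul_assoc a (l.prod * a) l.prod]
      _ = a * (a * l.prod) * l.prod := by rw [← commute_prod_of_idem ha l hl]
      _ = a * a * (l.prod * l.prod) := by
          rw [← mul_assoc a a l.prod, mul_assoc (a * a) l.prod l.prod]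
      _ = a * l.prod := by rw [ha, ih hl]

lemma absorb_of_mem {t : T} : ∀ l : List T, AllIdem l → t ∈ l → t * l.prod = l.prod := by
  intro l
  induction l with
  | nil => intro _ h; exact absurd h List.not_mem_nil
  | cons a l ih =>
    intro hall hmem
    have ha := hall a (List.mem_cons_self)
    have hl : AllIdem l := fun s hs => hall s (List.mem_cons_of_mem a hs)
    rw [List.prod_cons]
    rcases List.mem_cons.mp hmem with rfl | hmem
    · rw [← mul_assoc, ha]
    · have ht := hl t hmem
      rw [← mul_assoc, commute_of_idem ht ha, mul_assoc, ih hl hmem]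

lemma prod_dedup_of_allIdem [DecidableEq T] :
    ∀ l : List T, AllIdem l → l.prod = l.dedup.prod := by
  intro l
  induction l with
  | nil => intro _; rw [List.dedup_nil]
  | cons a l ih =>
    intro hall
    have ha := hall a (List.mem_cons_self)
    have hl : AllIdem l := fun s hs => hall s (List.mem_cons_of_mem a hs)
    by_cases hmem : a ∈ l
    · rw [List.dedup_cons_of_mem hmem, List.prod_cons, ih hl]
      have hd : AllIdem l.dedup := fun s hs => hl s (List.mem_dedup.mp hs)
      exact absorb_of_mem l.dedup hd (List.mem_dedup.mpr hmem)
    · rw [List.dedup_cons_of_notMem hmem, List.prod_cons, List.prod_cons, ih hl]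

lemma pairwise_commute_of_allIdem : ∀ l : List T, AllIdem l → l.Pairwise Commute := by
  intro l
  induction l with
  | nil => intro _; exact List.Pairwise.nil
  | cons a l ih =>
    intro hall
    have ha := hall a (List.mem_cons_self)
    have hl : AllIdem l := fun s hs => hall s (List.mem_cons_of_mem a hs)
    exact List.Pairwise.cons (fun s hs => commute_of_idem ha (hl s hs)) (ih hl)

lemma prod_eq_of_mem_iff (l₁ l₂ : List T) (h₁ : AllIdem l₁) (h₂ : AllIdem l₂)
    (hm : ∀ t, t ∈ l₁ ↔ t ∈ l₂) : l₁.prod = l₂.prod := by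
  classical
  have hd₁ : AllIdem l₁.dedup := fun s hs => h₁ s (List.mem_dedup.mp hs)
  have hperm : l₁.dedup.Perm l₂.dedup := by
    rw [List.perm_ext_iff_of_nodup (List.nodup_dedup l₁) (List.nodup_dedup l₂)]
    intro a
    rw [List.mem_dedup, List.mem_dedup]
    exact hm a
  rw [prod_dedup_of_allIdem l₁ h₁, prod_dedup_of_allIdem l₂ h₂]
  exact hperm.prod_eq' (pairwise_commute_of_allIdem l₁.dedup hd₁)

lemma conj_prod (u v : T) (huv : u * v = 1) (hvu : v * u = 1) :
    ∀ l : List T, (l.map (fun t => u * t * v)).prod = u * l.prod * v := by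
  intro l
  induction l with
  | nil => rw [List.map_nil, List.prod_nil, mul_one]; exact huv.symm
  | cons a l ih =>
    rw [List.map_cons, List.prod_cons, List.prod_cons, ih]
    calc (u * a * v) * (u * l.prod * v) = u * a * (v * (u * (l.prod * v))) := by
          rw [mul_assoc u l.prod v, mul_assoc (u*a) v (u * (l.prod * v))]
      _ = u * a * (v * u * (l.prod * v)) := by rw [← mul_assoc v u (l.prod * v)]
      _ = u * a * (l.prod * v) := by rw [hvu, one_mul]
      _ = u * (a * l.prod) * v := by
          rw [← mul_assoc (u * a) l.prod v, mul_assoc u a l.prod]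

end MoreInverse

section MaxLemmas
variable {T : Type w} [FInverseMonoid T]

lemma mx_sigma (a : T) : sigma (mx a) a := (FInverseMonoid.mx_isMaxOp a).1

lemma nle_mx {a b : T} (h : sigma b a) : nle b (mx a) := (FInverseMonoid.mx_isMaxOp a).2 b h

lemma mx_congr {a b : T} (h : sigma a b) : mx a = mx b := by
  refine nle_antisymm ?_ ?_
  · exact nle_mx (sigma_trans (mx_sigma a) h)
  · exact nle_mx (sigma_trans (mx_sigma b) (sigma_symm h))

lemma mx_mx (a : T) : mx (mx a) = mx a := mx_congr (mx_sigma a)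

lemma mx_one : mx (1 : T) = 1 := by
  obtain ⟨e, he, h1⟩ := nle_mx (sigma_refl (1 : T))
  set w : T := mx 1 with hw
  have hwinv : w⁻¹ * w⁻¹ = w⁻¹ := by
    have : w⁻¹ = (w⁻¹ * w) * e := by
      calc w⁻¹ = w⁻¹ * 1 := (mul_one _).symm
        _ = w⁻¹ * (w * e) := by rw [← h1]
        _ = (w⁻¹ * w) * e := (mul_assoc _ _ _).symm
    rw [this]
    exact idem_mul_idem (inv_mul_idem w) he
  have hwi : w * w = w := by
    have h2 : w⁻¹ = w := (idem_inv hwinv).symm.trans (InverseMonoid.inv_inv w)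
    rw [← h2]; exact hwinv
  calc w = w * 1 := (mul_one _).symm
    _ = w * (w * e) := by rw [← h1]
    _ = w * w * e := (mul_assoc _ _ _).symm
    _ = w * e := by rw [hwi]
    _ = 1 := h1.symm

lemma mx_idem {e : T} (he : e * e = e) : mx e = 1 := by
  have : sigma e 1 := ⟨e, he, by rw [one_mul]; exact he⟩
  rw [mx_congr this, mx_one]

lemma nle_decomp {T : Type w} [InverseMonoid T] {a b : T} (h : nle a b) :
    a * a⁻¹ * b = a := by
  obtain ⟨e, he, rfl⟩ := h
  have hinv : (b * e)⁻¹ = e * b⁻¹ := by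
    rw [InverseMonoid.mul_inv_rev, idem_inv he]
  calc (b * e) * (b * e)⁻¹ * b = (b * e) * (e * b⁻¹) * b := by rw [hinv]
    _ = b * (e * e) * b⁻¹ * b := by
        rw [mul_assoc b e (e * b⁻¹), ← mul_assoc e e b⁻¹, ← mul_assoc b (e * e) b⁻¹]
    _ = b * e * b⁻¹ * b := by rw [he]
    _ = b * (e * (b⁻¹ * b)) := by rw [mul_assoc (b * e) b⁻¹ b, mul_assoc b e (b⁻¹ * b)]
    _ = b * ((b⁻¹ * b) * e) := by
        rw [InverseMonoid.idem_comm e (b⁻¹ * b) he (inv_mul_idem b)]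
    _ = b * (b⁻¹ * b) * e := by rw [← mul_assoc b (b⁻¹ * b) e]
    _ = b * b⁻¹ * b * e := by rw [← mul_assoc b b⁻¹ b]
    _ = b * e := by rw [InverseMonoid.mul_inv_self_mul]

lemma mul_inv_mul_mx (a : T) : a * a⁻¹ * mx a = a :=
  nle_decomp (nle_mx (sigma_refl a))

end MaxLemmas


section Perfect
variable {T : Type w} [FInverseMonoid T]

lemma mx_inv_eq (hT : ∀ a b : T, mx a * mx b = mx (a * b)) (a : T) :
    mx a⁻¹ = (mx a)⁻¹ := by
  refine inv_eq_of_mul_eq_one ?_ ?_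
  · rw [hT, mx_idem (mul_inv_idem a)]
  · rw [hT, mx_idem (inv_mul_idem a)]

/-- The subgroup of maximum elements of a perfect F-inverse monoid. -/
def Tm (T : Type w) [FInverseMonoid T]
    (_hT : ∀ a b : T, mx a * mx b = mx (a * b)) : Type w := {t : T // mx t = t}

instance instGroupTm {T : Type w} [FInverseMonoid T]
    {hT : ∀ a b : T, mx a * mx b = mx (a * b)} : Group (Tm T hT) where
  mul a b := ⟨a.1 * b.1, by rw [← hT, a.2, b.2]⟩
  one := ⟨1, mx_one⟩
  inv a := ⟨a.1⁻¹, by rw [mx_inv_eq hT, a.2]⟩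
  mul_assoc a b c := Subtype.ext (mul_assoc a.1 b.1 c.1)
  one_mul a := Subtype.ext (one_mul a.1)
  mul_one a := Subtype.ext (mul_one a.1)
  inv_mul_cancel a := Subtype.ext (by
    show a.1⁻¹ * a.1 = 1
    calc a.1⁻¹ * a.1 = mx a.1⁻¹ * mx a.1 := by rw [mx_inv_eq hT, a.2]
      _ = mx (a.1⁻¹ * a.1) := hT _ _
      _ = 1 := mx_idem (inv_mul_idem a.1))

variable {hT : ∀ a b : T, mx a * mx b = mx (a * b)}

@[simp] lemma tm_mul_val (a b : Tm T hT) : (a * b).1 = a.1 * b.1 := rfl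
@[simp] lemma tm_one_val : (1 : Tm T hT).1 = 1 := rfl
@[simp] lemma tm_inv_val (a : Tm T hT) : (a⁻¹).1 = a.1⁻¹ := rfl

lemma tm_mul_inv_val (a : Tm T hT) : a.1 * a.1⁻¹ = 1 := by
  have := congrArg Subtype.val (mul_inv_cancel a)
  exact this

lemma tm_inv_mul_val (a : Tm T hT) : a.1⁻¹ * a.1 = 1 := by
  have := congrArg Subtype.val (inv_mul_cancel a)
  exact this

end Perfect


section PExpDecomp
variable {G : Type u} [Group G] {X : Type v} {φ : X → G}
open Subgraph

@[simp] lemma emptyG_verts : (emptyG φ).verts = ∅ := rfl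
@[simp] lemma emptyG_edges : (emptyG φ).edges = ∅ := rfl
@[simp] lemma edgeG_verts (e : G × X) : (edgeG φ e).verts = {e.1, e.1 * φ e.2} := rfl
@[simp] lemma edgeG_edges (e : G × X) : (edgeG φ e).edges = {e} := rfl

lemma smul_emptyG (g : G) : g • (emptyG φ) = emptyG φ := by
  refine Subgraph.ext' ?_ ?_ <;> simp

lemma one_smul_graph (Γ : Subgraph φ) : (1 : G) • Γ = Γ := by
  refine Subgraph.ext' ?_ ?_ <;> simp

lemma smul_smul_graph (g h : G) (Γ : Subgraph φ) : g • (h • Γ) = (g * h) • Γ := by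
  refine Subgraph.ext' ?_ ?_ <;>
    simp only [Subgraph.smul_verts, Subgraph.smul_edges, Set.image_image, mul_assoc]

lemma empty_union_graph (Γ : Subgraph φ) : emptyG φ ∪ Γ = Γ := by
  refine Subgraph.ext' ?_ ?_ <;> simp

lemma union_emptyG (Γ : Subgraph φ) : Γ ∪ emptyG φ = Γ := by
  refine Subgraph.ext' ?_ ?_ <;> simp

lemma union_self_graph (Γ : Subgraph φ) : Γ ∪ Γ = Γ := by
  refine Subgraph.ext' ?_ ?_ <;> simp

lemma smul_edgeG (g : G) (e : G × X) : g • edgeG φ e = edgeG φ (g * e.1, e.2) := by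
  refine Subgraph.ext' ?_ ?_
  · simp [Set.image_insert_eq, mul_assoc]
  · simp

/-- The element `(∅, g)` of `P(G)`. -/
def muP (φ : X → G) (g : G) : PExp φ where
  graph := emptyG φ
  elt := g
  finite := ⟨Set.finite_empty, Set.finite_empty⟩
  noIsolated := by intro v hv; simp at hv

/-- The element `(Γ_e, 1)` of `P(G)` for an edge `e`. -/
def edgeP (φ : X → G) (e : G × X) : PExp φ where
  graph := edgeG φ e
  elt := 1
  finite := ⟨(Set.finite_singleton _).insert _, Set.finite_singleton _⟩
  noIsolated := edgeG_noIsolated φ e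

@[simp] lemma muP_graph (g : G) : (muP φ g).graph = emptyG φ := rfl
@[simp] lemma muP_elt (g : G) : (muP φ g).elt = g := rfl
@[simp] lemma edgeP_graph (e : G × X) : (edgeP φ e).graph = edgeG φ e := rfl
@[simp] lemma edgeP_elt (e : G × X) : (edgeP φ e).elt = 1 := rfl

lemma muP_one : muP φ 1 = 1 := PExp.ext' rfl rfl

lemma muP_mul (g h : G) : muP φ g * muP φ h = muP φ (g * h) := by
  refine PExp.ext' ?_ rfl
  rw [PExp.mul_graph, muP_graph, muP_graph, muP_elt, smul_emptyG, union_emptyG]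
  rfl

lemma muP_inv (g : G) : (muP φ g)⁻¹ = muP φ g⁻¹ := by
  refine PExp.ext' ?_ rfl
  rw [PExp.inv_graph, muP_graph, muP_elt, smul_emptyG]
  rfl

lemma genEltP_mul_inv (x : X) : genEltP φ x * (genEltP φ x)⁻¹ = edgeP φ (1, x) := by
  refine PExp.ext' ?_ ?_
  · show edgeG φ (1, x) ∪ (genEltP φ x).elt • ((genEltP φ x).elt⁻¹ • edgeG φ (1, x)) = _
    rw [smul_smul_graph, mul_inv_cancel, one_smul_graph, union_self_graph, edgeP_graph]
  · show φ x * (φ x)⁻¹ = 1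
    rw [mul_inv_cancel]

lemma conjP (g : G) (e : G × X) :
    muP φ g * (edgeP φ e * muP φ g⁻¹) = edgeP φ (g * e.1, e.2) := by
  refine PExp.ext' ?_ ?_
  · show emptyG φ ∪ g • (edgeG φ e ∪ (1 : G) • emptyG φ) = edgeG φ (g * e.1, e.2)
    rw [smul_emptyG, union_emptyG, empty_union_graph, smul_edgeG]
  · show g * (1 * g⁻¹) = 1
    rw [one_mul, mul_inv_cancel]

lemma edgeP_fact (e : G × X) :
    edgeP φ e = muP φ e.1 * ((genEltP φ e.2 * (genEltP φ e.2)⁻¹) * (muP φ e.1)⁻¹) := by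
  rw [genEltP_mul_inv, muP_inv, conjP]
  rw [show (e.1 * ((1 : G), e.2).1, ((1 : G), e.2).2) = e by simp]

lemma prodEdgeP_elt : ∀ l : List (G × X), ((l.map (edgeP φ)).prod).elt = 1 := by
  intro l
  induction l with
  | nil => rfl
  | cons a l ih => rw [List.map_cons, List.prod_cons, PExp.mul_elt, edgeP_elt, one_mul, ih]

lemma prodEdgeP_edges : ∀ l : List (G × X),
    ((l.map (edgeP φ)).prod).graph.edges = {e | e ∈ l} := by
  intro l
  induction l with
  | nil => show (∅ : Set (G × X)) = _; ext e; simp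
  | cons a l ih =>
    rw [List.map_cons, List.prod_cons, PExp.mul_graph, edgeP_elt, one_smul_graph,
      Subgraph.union_edges, edgeP_graph, edgeG_edges, ih]
    ext e; simp [List.mem_cons]

lemma prodEdgeP_verts : ∀ l : List (G × X),
    ((l.map (edgeP φ)).prod).graph.verts = {v | ∃ e ∈ l, v = e.1 ∨ v = e.1 * φ e.2} := by
  intro l
  induction l with
  | nil => show (∅ : Set G) = _; ext v; simp
  | cons a l ih =>
    rw [List.map_cons, List.prod_cons, PExp.mul_graph, edgeP_elt, one_smul_graph,
      Subgraph.union_verts, edgeP_graph, edgeG_verts, ih]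
    ext v
    simp only [Set.mem_union, Set.mem_insert_iff, Set.mem_singleton_iff, Set.mem_setOf_eq,
      List.mem_cons]
    constructor
    · rintro ((rfl | rfl) | ⟨e, he, h⟩)
      · exact ⟨a, Or.inl rfl, Or.inl rfl⟩
      · exact ⟨a, Or.inl rfl, Or.inr rfl⟩
      · exact ⟨e, Or.inr he, h⟩
    · rintro ⟨e, (rfl | he), h⟩
      · rcases h with rfl | rfl
        · exact Or.inl (Or.inl rfl)
        · exact Or.inl (Or.inr rfl)
      · exact Or.inr ⟨e, he, h⟩

lemma decompP (a : PExp φ) (l : List (G × X)) (hl : ∀ e, e ∈ l ↔ e ∈ a.graph.edges) :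
    a = (l.map (edgeP φ)).prod * muP φ a.elt := by
  refine PExp.ext' (Subgraph.ext' ?_ ?_) ?_
  · rw [PExp.mul_graph, muP_graph, prodEdgeP_elt, one_smul_graph, union_emptyG, prodEdgeP_verts]
    ext v
    simp only [Set.mem_setOf_eq]
    constructor
    · intro hv
      obtain ⟨e, he, h⟩ := a.noIsolated v hv
      exact ⟨e, (hl e).mpr he, h⟩
    · rintro ⟨e, he, rfl | rfl⟩
      · exact a.graph.src_mem e ((hl e).mp he)
      · exact a.graph.tgt_mem e ((hl e).mp he)
  · rw [PExp.mul_graph, muP_graph, prodEdgeP_elt, one_smul_graph, union_emptyG, prodEdgeP_edges]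
    ext e
    exact ((hl e).symm : _)
  · rw [PExp.mul_elt, prodEdgeP_elt, one_mul, muP_elt]

end PExpDecomp


section MoreMonoid
variable {T : Type w} [Monoid T]

lemma conj_idem {u v i : T} (hvu : v * u = 1) (hi : i * i = i) :
    (u * i * v) * (u * i * v) = u * i * v := by
  calc (u * i * v) * (u * i * v) = (u * i) * (v * ((u * i) * v)) := by
        rw [mul_assoc (u * i) v ((u * i) * v)]
    _ = (u * i) * ((v * (u * i)) * v) := by rw [← mul_assoc v (u * i) v]
    _ = (u * i) * (((v * u) * i) * v) := by rw [← mul_assoc v u i]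
    _ = (u * i) * (i * v) := by rw [hvu, one_mul]
    _ = ((u * i) * i) * v := by rw [← mul_assoc (u * i) i v]
    _ = u * i * v := by rw [mul_assoc u i i, hi]

end MoreMonoid

section Construction
variable {X : Type v} {T : Type w} [FInverseMonoid T]

/-- The group homomorphism `FG_X → Tm T hT`. -/
def NgenHom (hT : ∀ a b : T, mx a * mx b = mx (a * b)) (f : X → T) :
    FreeGroup X →* Tm T hT :=
  FreeGroup.lift (fun x => (⟨mx (f x), mx_mx (f x)⟩ : Tm T hT))

/-- The group homomorphism `FG_X → T` landing in the maximum elements. -/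
def Ngen (hT : ∀ a b : T, mx a * mx b = mx (a * b)) (f : X → T) : FreeGroup X → T :=
  fun g => (NgenHom hT f g).1

variable (hT : ∀ a b : T, mx a * mx b = mx (a * b)) (f : X → T)

lemma Ngen_one : Ngen hT f 1 = 1 :=
  congrArg Subtype.val (map_one (NgenHom hT f))

lemma Ngen_mul (g h : FreeGroup X) : Ngen hT f (g * h) = Ngen hT f g * Ngen hT f h :=
  congrArg Subtype.val (map_mul (NgenHom hT f) g h)

lemma Ngen_inv (g : FreeGroup X) : Ngen hT f g⁻¹ = (Ngen hT f g)⁻¹ :=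
  congrArg Subtype.val (map_inv (NgenHom hT f) g)

lemma Ngen_of (x : X) : Ngen hT f (FreeGroup.of x) = mx (f x) := by
  have h : NgenHom hT f (FreeGroup.of x) = ⟨mx (f x), mx_mx (f x)⟩ :=
    FreeGroup.lift_apply_of
  exact congrArg Subtype.val h

lemma Ngen_mx (g : FreeGroup X) : mx (Ngen hT f g) = Ngen hT f g :=
  (NgenHom hT f g).2

lemma Ngen_mul_inv (g : FreeGroup X) : Ngen hT f g * (Ngen hT f g)⁻¹ = 1 :=
  tm_mul_inv_val (NgenHom hT f g)

lemma Ngen_inv_mul (g : FreeGroup X) : (Ngen hT f g)⁻¹ * Ngen hT f g = 1 :=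
  tm_inv_mul_val (NgenHom hT f g)

/-- The idempotent of `T` associated with an edge of `Cay(FG_X)`. -/
def Efun (e : FreeGroup X × X) : T :=
  Ngen hT f e.1 * (f e.2 * (f e.2)⁻¹) * (Ngen hT f e.1)⁻¹

lemma Efun_idem (e : FreeGroup X × X) : Efun hT f e * Efun hT f e = Efun hT f e :=
  conj_idem (Ngen_inv_mul hT f e.1) (mul_inv_idem (f e.2))

lemma allIdem_map_Efun (l : List (FreeGroup X × X)) : AllIdem (l.map (Efun hT f)) := by
  intro s hs
  obtain ⟨e, _, rfl⟩ := List.mem_map.mp hs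
  exact Efun_idem hT f e

lemma Efun_conj (g : FreeGroup X) (e : FreeGroup X × X) :
    Efun hT f (g * e.1, e.2) = Ngen hT f g * Efun hT f e * (Ngen hT f g)⁻¹ := by
  show Ngen hT f (g * e.1) * (f e.2 * (f e.2)⁻¹) * (Ngen hT f (g * e.1))⁻¹ = _
  rw [Ngen_mul, InverseMonoid.mul_inv_rev]
  set u := Ngen hT f g
  set w := Ngen hT f e.1
  set i := f e.2 * (f e.2)⁻¹
  show u * w * i * (w⁻¹ * u⁻¹) = u * (w * i * w⁻¹) * u⁻¹
  rw [mul_assoc u w i, mul_assoc u (w * i) (w⁻¹ * u⁻¹), ← mul_assoc (w * i) w⁻¹ u⁻¹,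
    ← mul_assoc u ((w * i) * w⁻¹) u⁻¹]

/-- The canonical morphism `P(FG_X) → T`. -/
noncomputable def hcan : PExp (FreeGroup.of : X → FreeGroup X) → T :=
  fun a => ((a.finite.2.toFinset.toList).map (Efun hT f)).prod * Ngen hT f a.elt

lemma hcan_spec (a : PExp (FreeGroup.of : X → FreeGroup X)) (l : List (FreeGroup X × X))
    (hl : ∀ e, e ∈ l ↔ e ∈ a.graph.edges) :
    hcan hT f a = (l.map (Efun hT f)).prod * Ngen hT f a.elt := by
  show (_ : T) * _ = _
  congr 1
  refine prod_eq_of_mem_iff _ _ (allIdem_map_Efun hT f _) (allIdem_map_Efun hT f _) ?_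
  intro t
  simp only [List.mem_map, Finset.mem_toList, Set.Finite.mem_toFinset, hl]

lemma hcan_one : hcan hT f (1 : PExp (FreeGroup.of : X → FreeGroup X)) = 1 := by
  rw [hcan_spec hT f 1 [] (by intro e; simp), List.map_nil, List.prod_nil, one_mul,
    PExp.one_elt, Ngen_one]

lemma hcan_mul (a b : PExp (FreeGroup.of : X → FreeGroup X)) :
    hcan hT f (a * b) = hcan hT f a * hcan hT f b := by
  set la := a.finite.2.toFinset.toList with hla
  set lb := b.finite.2.toFinset.toList with hlb
  have hmem : ∀ e, e ∈ la ++ lb.map (fun e => (a.elt * e.1, e.2)) ↔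
      e ∈ (a * b).graph.edges := by
    intro e
    simp only [List.mem_append, List.mem_map, hla, hlb, Finset.mem_toList,
      Set.Finite.mem_toFinset, PExp.mul_graph, Subgraph.union_edges, Subgraph.smul_edges,
      Set.mem_union, Set.mem_image]
  rw [hcan_spec hT f (a * b) _ hmem, List.map_append, List.prod_append, PExp.mul_elt,
    Ngen_mul, List.map_map]
  have hcomp : lb.map ((Efun hT f) ∘ (fun e => (a.elt * e.1, e.2))) =
      (lb.map (Efun hT f)).map
        (fun t => Ngen hT f a.elt * t * (Ngen hT f a.elt)⁻¹) := by
    rw [List.map_map]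
    refine List.map_congr_left ?_
    intro e _
    exact Efun_conj hT f a.elt e
  rw [hcomp, conj_prod _ _ (Ngen_mul_inv hT f a.elt) (Ngen_inv_mul hT f a.elt)]
  set A := (la.map (Efun hT f)).prod
  set B := (lb.map (Efun hT f)).prod
  set u := Ngen hT f a.elt
  set v := Ngen hT f b.elt
  show A * (u * B * u⁻¹) * (u * v) = A * u * (B * v)
  calc A * (u * B * u⁻¹) * (u * v) = A * ((u * B * u⁻¹) * (u * v)) := by
        rw [mul_assoc A (u * B * u⁻¹) (u * v)]
    _ = A * ((u * B) * (u⁻¹ * (u * v))) := by rw [mul_assoc (u * B) u⁻¹ (u * v)]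
    _ = A * ((u * B) * ((u⁻¹ * u) * v)) := by rw [← mul_assoc u⁻¹ u v]
    _ = A * ((u * B) * v) := by rw [Ngen_inv_mul hT f a.elt, one_mul]
    _ = A * (u * (B * v)) := by rw [mul_assoc u B v]
    _ = A * u * (B * v) := by rw [← mul_assoc A u (B * v)]

lemma hcan_inv (a : PExp (FreeGroup.of : X → FreeGroup X)) :
    hcan hT f a⁻¹ = (hcan hT f a)⁻¹ := by
  set la := a.finite.2.toFinset.toList with hla
  have hmem : ∀ e, e ∈ la.map (fun e => (a.elt⁻¹ * e.1, e.2)) ↔ e ∈ (a⁻¹).graph.edges := by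
    intro e
    simp only [List.mem_map, hla, Finset.mem_toList, Set.Finite.mem_toFinset,
      PExp.inv_graph, Subgraph.smul_edges, Set.mem_image]
  rw [hcan_spec hT f a⁻¹ _ hmem, PExp.inv_elt, List.map_map]
  have hcomp : la.map ((Efun hT f) ∘ (fun e => (a.elt⁻¹ * e.1, e.2))) =
      (la.map (Efun hT f)).map
        (fun t => Ngen hT f a.elt⁻¹ * t * (Ngen hT f a.elt⁻¹)⁻¹) := by
    rw [List.map_map]
    refine List.map_congr_left ?_
    intro e _
    exact Efun_conj hT f a.elt⁻¹ e
  rw [hcomp, conj_prod _ _ (Ngen_mul_inv hT f a.elt⁻¹) (Ngen_inv_mul hT f a.elt⁻¹)]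
  set A := (la.map (Efun hT f)).prod with hA
  have hAi : A * A = A := prod_idem_of_allIdem _ (allIdem_map_Efun hT f la)
  show Ngen hT f a.elt⁻¹ * A * (Ngen hT f a.elt⁻¹)⁻¹ * Ngen hT f a.elt⁻¹ = (A * Ngen hT f a.elt)⁻¹
  rw [mul_assoc (Ngen hT f a.elt⁻¹ * A) (Ngen hT f a.elt⁻¹)⁻¹ (Ngen hT f a.elt⁻¹),
    Ngen_inv_mul hT f a.elt⁻¹, mul_one, InverseMonoid.mul_inv_rev, idem_inv hAi,
    Ngen_inv hT f a.elt]

lemma hcan_max (a : PExp (FreeGroup.of : X → FreeGroup X)) :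
    hcan hT f (pMax a) = mx (hcan hT f a) := by
  have h1 : hcan hT f (pMax a) = Ngen hT f a.elt := by
    rw [hcan_spec hT f (pMax a) [] (by intro e; simp [pMax]), List.map_nil, List.prod_nil,
      one_mul]
    rfl
  rw [h1]
  show _ = mx (_ * _)
  rw [← hT, mx_idem (prod_idem_of_allIdem _ (allIdem_map_Efun hT f _)), one_mul,
    Ngen_mx]

lemma hcan_gen (x : X) : hcan hT f (genEltP FreeGroup.of x) = f x := by
  have hmem : ∀ e, e ∈ [((1 : FreeGroup X), x)] ↔
      e ∈ (genEltP (FreeGroup.of : X → FreeGroup X) x).graph.edges := by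
    intro e
    simp [genEltP]
  rw [hcan_spec hT f _ _ hmem, List.map_cons, List.map_nil, List.prod_cons, List.prod_nil,
    mul_one]
  show Efun hT f (1, x) * Ngen hT f (FreeGroup.of x) = f x
  show Ngen hT f 1 * (f x * (f x)⁻¹) * (Ngen hT f 1)⁻¹ * Ngen hT f (FreeGroup.of x) = f x
  rw [Ngen_one, one_mul, one_inv', mul_one, Ngen_of, mul_inv_mul_mx]

lemma hprime_mu (h' : PExp (FreeGroup.of : X → FreeGroup X) → T)
    (h1 : h' 1 = 1)
    (hmul : ∀ a b, h' (a * b) = h' a * h' b)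
    (hinv : ∀ a, h' a⁻¹ = (h' a)⁻¹)
    (hmax : ∀ a, h' (pMax a) = mx (h' a))
    (hgen : ∀ x : X, h' (genEltP FreeGroup.of x) = f x)
    (g : FreeGroup X) : h' (muP FreeGroup.of g) = Ngen hT f g := by
  induction g using FreeGroup.induction_on with
  | C1 => rw [muP_one, h1, Ngen_one]
  | of x =>
    have hp : muP (FreeGroup.of : X → FreeGroup X) (FreeGroup.of x) =
        pMax (genEltP FreeGroup.of x) := PExp.ext' rfl rfl
    show h' (muP FreeGroup.of (FreeGroup.of x)) = Ngen hT f (FreeGroup.of x)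
    rw [hp, hmax, hgen, Ngen_of]
  | inv_of x ih =>
    have ih' : h' (muP FreeGroup.of (FreeGroup.of x)) = Ngen hT f (FreeGroup.of x) := ih
    show h' (muP FreeGroup.of (FreeGroup.of x)⁻¹) = Ngen hT f (FreeGroup.of x)⁻¹
    rw [← muP_inv, hinv, ih', ← Ngen_inv]
  | mul g h ihg ihh =>
    rw [← muP_mul, hmul, ihg, ihh, Ngen_mul]

lemma hprime_eq (h' : PExp (FreeGroup.of : X → FreeGroup X) → T)
    (h1 : h' 1 = 1)
    (hmul : ∀ a b, h' (a * b) = h' a * h' b)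
    (hinv : ∀ a, h' a⁻¹ = (h' a)⁻¹)
    (hmax : ∀ a, h' (pMax a) = mx (h' a))
    (hgen : ∀ x : X, h' (genEltP FreeGroup.of x) = f x) :
    h' = hcan hT f := by
  have hedge : ∀ e : FreeGroup X × X, h' (edgeP FreeGroup.of e) = Efun hT f e := by
    intro e
    rw [edgeP_fact e, hmul, hmul, hmul, hinv, hinv, hgen,
      hprime_mu hT f h' h1 hmul hinv hmax hgen e.1]
    show Ngen hT f e.1 * (f e.2 * (f e.2)⁻¹ * (Ngen hT f e.1)⁻¹) = Efun hT f e
    rw [← mul_assoc]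
    rfl
  have hlist : ∀ l : List (FreeGroup X × X),
      h' ((l.map (edgeP FreeGroup.of)).prod) = (l.map (Efun hT f)).prod := by
    intro l
    induction l with
    | nil => rw [List.map_nil, List.map_nil, List.prod_nil, List.prod_nil]; exact h1
    | cons e l ih =>
      rw [List.map_cons, List.map_cons, List.prod_cons, List.prod_cons, hmul, hedge, ih]
  funext a
  have hmem : ∀ e, e ∈ a.finite.2.toFinset.toList ↔ e ∈ a.graph.edges := by
    intro e
    simp only [Finset.mem_toList, Set.Finite.mem_toFinset]
  conv_lhs => rw [decompP a _ hmem]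
  rw [hmul, hlist, hprime_mu hT f h' h1 hmul hinv hmax hgen a.elt]
  rfl

end Construction

/-- `P(FG_X)`, for the free group `FG_X` on `X` (generated via the canonical
inclusion), is a free `X`-generated perfect F-inverse monoid: for every perfect F-inverse
monoid `T` and every map `f : X → T` there is a unique map `P(FG_X) → T` preserving `·`,
`⁻¹`, `m`, `1` and sending `(Γ_x, x)` to `f x` for every `x ∈ X`. -/
theorem statement19 {X : Type v} {T : Type w} [FInverseMonoid T]
    (hT : ∀ a b : T, mx a * mx b = mx (a * b)) (f : X → T) :
    ∃ h : PExp (FreeGroup.of : X → FreeGroup X) → T,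
      (h 1 = 1 ∧
       (∀ a b, h (a * b) = h a * h b) ∧
       (∀ a, h a⁻¹ = (h a)⁻¹) ∧
       (∀ a, h (pMax a) = mx (h a)) ∧
       ∀ x : X, h (genEltP FreeGroup.of x) = f x) ∧
      ∀ h' : PExp (FreeGroup.of : X → FreeGroup X) → T,
        (h' 1 = 1 ∧
         (∀ a b, h' (a * b) = h' a * h' b) ∧
         (∀ a, h' a⁻¹ = (h' a)⁻¹) ∧
         (∀ a, h' (pMax a) = mx (h' a)) ∧
         ∀ x : X, h' (genEltP FreeGroup.of x) = f x) → h' = h := by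
  refine ⟨hcan hT f, ⟨hcan_one hT f, hcan_mul hT f, hcan_inv hT f, hcan_max hT f,
    hcan_gen hT f⟩, ?_⟩
  rintro h' ⟨h1, hmul, hinv, hmax, hgen⟩
  exact hprime_eq hT f h' h1 hmul hinv hmax hgen

end FInvPaper
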